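/- For every 3CNF formula φ = C1 ∧ ⋯ ∧ Cm over Boolean variables x1,…,xn, with a fixed letter a ∈ Σ, define βi := ((xi{ε}·a) ∨ xi{a}) for 1 ≤ i ≤ n and γ1 := β1·⋯·βn; for each clause Ci with literal variable indices i1 < i2 < i3, define γ2^i := β1⋯β_{i1−1}·δ_{i1}·β_{i1+1}⋯β_{i2−1}·δ_{i2}·β_{i2+1}⋯β_{i3−1}·δ_{i3}·β_{i3+1}⋯βn, where δℓ := (xℓ{ε}·a) if xℓ occurs positively in Ci and δℓ := xℓ{a} if ¬xℓ occurs in Ci, and define γ2 := γ2^1 ∨ ⋯ ∨ γ2^m. Then γ1 and γ2 are functional regex formulas with Vars(γ1) = Vars(γ2) = {x1,…,xn}, and ⟦γ1 ∖ γ2⟧(a^n) ≠ ∅ if and only if φ is satisfiable. -/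

import Mathlib

namespace Spanners

open scoped Classical

/-! ### Spans and mappings -/

abbrev Span := ℕ × ℕ

abbrev VMapping := ℕ → Option Span

def emptyMapping : VMapping := fun _ => none

def mapDom (μ : VMapping) : Set ℕ := {x | μ x ≠ none}

/-- Two mappings are compatible if they agree on every common variable. -/
def Compatible (μ1 μ2 : VMapping) : Prop :=
  ∀ x s1 s2, μ1 x = some s1 → μ2 x = some s2 → s1 = s2

def DisjointDom (μ1 μ2 : VMapping) : Prop :=
  ∀ x, μ1 x = none ∨ μ2 x = none

def munion (μ1 μ2 : VMapping) : VMapping := fun x =>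
  match μ1 x with
  | some s => some s
  | none => μ2 x

def minsert (x : ℕ) (s : Span) (μ : VMapping) : VMapping :=
  fun y => if y = x then some s else μ y

/-- Natural join of two sets of mappings. -/
def joinSet (S1 S2 : Set VMapping) : Set VMapping :=
  {μ | ∃ μ1 ∈ S1, ∃ μ2 ∈ S2, Compatible μ1 μ2 ∧ μ = munion μ1 μ2}

/-- Difference of two sets of mappings. -/
def diffSet (S1 S2 : Set VMapping) : Set VMapping :=
  {μ1 | μ1 ∈ S1 ∧ ∀ μ2 ∈ S2, ¬ Compatible μ1 μ2}

/-- Restriction of a mapping to a set of variables. -/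
noncomputable def restrictMap (μ : VMapping) (V : Set ℕ) : VMapping :=
  fun x => if x ∈ V then μ x else none

/-- Projection of a set of mappings to a set of variables. -/
def projSet (V : Set ℕ) (S : Set VMapping) : Set VMapping :=
  {μ' | ∃ μ ∈ S, μ' = restrictMap μ V}

/-! ### Regex formulas -/

inductive RGX (Sig : Type) where
  | empty : RGX Sig
  | eps : RGX Sig
  | letter : Sig → RGX Sig
  | union : RGX Sig → RGX Sig → RGX Sig
  | concat : RGX Sig → RGX Sig → RGX Sig
  | star : RGX Sig → RGX Sig
  | bind : ℕ → RGX Sig → RGX Sig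

variable {Sig : Type}

def RGX.vars : RGX Sig → Finset ℕ
  | .empty => ∅
  | .eps => ∅
  | .letter _ => ∅
  | .union a b => a.vars ∪ b.vars
  | .concat a b => a.vars ∪ b.vars
  | .star a => a.vars
  | .bind x a => insert x a.vars

def RGX.size : RGX Sig → ℕ
  | .empty => 1
  | .eps => 1
  | .letter _ => 1
  | .union a b => a.size + b.size + 1
  | .concat a b => a.size + b.size + 1
  | .star a => a.size + 1
  | .bind _ a => a.size + 1

/-- The schemaless semantics `⟨α⟩(d)`: `RMatch α d i j μ` means `([i,j⟩, μ) ∈ ⟨α⟩(d)`. -/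
inductive RMatch : RGX Sig → List Sig → ℕ → ℕ → VMapping → Prop where
  | eps {d : List Sig} {i : ℕ} (h1 : 1 ≤ i) (h2 : i ≤ d.length + 1) :
      RMatch .eps d i i emptyMapping
  | letter {d : List Sig} {i : ℕ} {σ : Sig} (h1 : 1 ≤ i) (h2 : d[i - 1]? = some σ) :
      RMatch (.letter σ) d i (i + 1) emptyMapping
  | unionL {a b : RGX Sig} {d : List Sig} {i j : ℕ} {μ : VMapping}
      (h : RMatch a d i j μ) : RMatch (.union a b) d i j μ
  | unionR {a b : RGX Sig} {d : List Sig} {i j : ℕ} {μ : VMapping}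
      (h : RMatch b d i j μ) : RMatch (.union a b) d i j μ
  | concat {a b : RGX Sig} {d : List Sig} {i k j : ℕ} {μ1 μ2 : VMapping}
      (h1 : RMatch a d i k μ1) (h2 : RMatch b d k j μ2) (hd : DisjointDom μ1 μ2) :
      RMatch (.concat a b) d i j (munion μ1 μ2)
  | bind {x : ℕ} {a : RGX Sig} {d : List Sig} {i j : ℕ} {μ : VMapping}
      (h : RMatch a d i j μ) (hx : μ x = none) :
      RMatch (.bind x a) d i j (minsert x (i, j) μ)
  | starNil {a : RGX Sig} {d : List Sig} {i : ℕ} (h1 : 1 ≤ i) (h2 : i ≤ d.length + 1) :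
      RMatch (.star a) d i i emptyMapping
  | starCons {a : RGX Sig} {d : List Sig} {i k j : ℕ} {μ1 μ2 : VMapping}
      (h1 : RMatch a d i k μ1) (h2 : RMatch (.star a) d k j μ2) (hd : DisjointDom μ1 μ2) :
      RMatch (.star a) d i j (munion μ1 μ2)

/-- `⟦α⟧(d)`: mappings extracted with the full span. -/
def rgxSem (α : RGX Sig) (d : List Sig) : Set VMapping :=
  {μ | RMatch α d 1 (d.length + 1) μ}

/-- Sequential regex formulas. -/
def RGX.Sequential : RGX Sig → Prop
  | .empty => True
  | .eps => True
  | .letter _ => True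
  | .union a b => a.Sequential ∧ b.Sequential
  | .concat a b => a.Sequential ∧ b.Sequential ∧ Disjoint a.vars b.vars
  | .star a => a.Sequential ∧ a.vars = ∅
  | .bind x a => a.Sequential ∧ x ∉ a.vars

/-- Variable-free words over the alphabet (built from ε, letters and concatenation). -/
inductive RGX.IsWord : RGX Sig → Prop where
  | eps : RGX.IsWord .eps
  | letter (σ : Sig) : RGX.IsWord (.letter σ)
  | concat {a b : RGX Sig} : a.IsWord → b.IsWord → RGX.IsWord (.concat a b)

/-- Functional for a set `V` of variables. -/
inductive FunctionalFor : RGX Sig → Finset ℕ → Prop where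
  | word {α : RGX Sig} (h : α.IsWord) : FunctionalFor α ∅
  | union {a b : RGX Sig} {V : Finset ℕ} (ha : FunctionalFor a V) (hb : FunctionalFor b V) :
      FunctionalFor (.union a b) V
  | concat {a b : RGX Sig} {V : Finset ℕ} (V1 : Finset ℕ) (hsub : V1 ⊆ V)
      (ha : FunctionalFor a V1) (hb : FunctionalFor b (V \ V1)) :
      FunctionalFor (.concat a b) V
  | star {a : RGX Sig} (h : FunctionalFor a ∅) : FunctionalFor (.star a) ∅
  | bind {x : ℕ} {a : RGX Sig} {V : Finset ℕ} (h : FunctionalFor a (V.erase x)) :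
      FunctionalFor (.bind x a) V

def RGX.Functional (α : RGX Sig) : Prop := FunctionalFor α α.vars

/-- Disjunctive functional regex formulas: finite disjunctions of functional regex formulas. -/
inductive DisjFunctional : RGX Sig → Prop where
  | base {γ : RGX Sig} (h : γ.Functional) : DisjFunctional γ
  | union {a b : RGX Sig} (ha : DisjFunctional a) (hb : DisjFunctional b) :
      DisjFunctional (.union a b)

/-- Number of disjuncts of a (disjunctive) regex formula. -/
def countDisjuncts : RGX Sig → ℕ
  | .union a b => countDisjuncts a + countDisjuncts b
  | _ => 1

/-- Disjunction-free regex formulas. -/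
def RGX.DisjFree : RGX Sig → Prop
  | .union _ _ => False
  | .concat a b => a.DisjFree ∧ b.DisjFree
  | .star a => a.DisjFree
  | .bind _ a => a.DisjFree
  | _ => True

/-- `γ` is synchronized for `x`: no subformula `γ1 ∨ γ2` contains `x`. -/
def RGX.SyncFor : RGX Sig → ℕ → Prop
  | .union a b, x => (x ∉ a.vars ∧ x ∉ b.vars) ∧ a.SyncFor x ∧ b.SyncFor x
  | .concat a b, x => a.SyncFor x ∧ b.SyncFor x
  | .star a, x => a.SyncFor x
  | .bind _ a, x => a.SyncFor x
  | _, _ => True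

/-- Concatenation of a list of regex formulas. -/
def concatList : List (RGX Sig) → RGX Sig
  | [] => .eps
  | [α] => α
  | α :: rest => .concat α (concatList rest)

/-- Disjunction of a list of regex formulas. -/
def disjList : List (RGX Sig) → RGX Sig
  | [] => .empty
  | [α] => α
  | α :: rest => .union α (disjList rest)

/-! ### vset-automata -/

inductive VLabel (Sig : Type) where
  | eps : VLabel Sig
  | letter : Sig → VLabel Sig
  | openv : ℕ → VLabel Sig
  | closev : ℕ → VLabel Sig
deriving DecidableEq

structure VA (Sig : Type) [DecidableEq Sig] where
  q0 : ℕ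
  F : Finset ℕ
  δ : Finset (ℕ × VLabel Sig × ℕ)

variable [DecidableEq Sig]

/-- The states of a VA: the initial state and all states mentioned in `F` or in transitions. -/
def statesOf (A : VA Sig) : Finset ℕ :=
  insert A.q0 (A.F ∪ A.δ.image (fun t => t.1) ∪ A.δ.image (fun t => t.2.2))

def labelVars : VLabel Sig → Finset ℕ
  | .openv x => {x}
  | .closev x => {x}
  | _ => ∅

/-- `Vars(A)`: the variables mentioned in the transitions of `A`. -/
def varsOf (A : VA Sig) : Finset ℕ := A.δ.biUnion (fun t => labelVars t.2.1)

/-- Total size of a VA: number of states plus number of transitions. -/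
def vaSize (A : VA Sig) : ℕ := (statesOf A).card + A.δ.card

/-- `A.PathFrom p ls q`: a path (run segment) from `p` to `q` with label sequence `ls`. -/
inductive VA.PathFrom (A : VA Sig) : ℕ → List (VLabel Sig) → ℕ → Prop where
  | nil (q : ℕ) : VA.PathFrom A q [] q
  | cons {p q r : ℕ} {l : VLabel Sig} {ls : List (VLabel Sig)}
      (h : (p, l, q) ∈ A.δ) (htail : VA.PathFrom A q ls r) : VA.PathFrom A p (l :: ls) r

/-- The word (document) read by a sequence of labels. -/
def readWord : List (VLabel Sig) → List Sig :=
  List.filterMap fun l => match l with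
    | VLabel.letter σ => some σ
    | _ => none

def isLetterL : VLabel Sig → Bool
  | .letter _ => true
  | _ => false

/-- The current position in the document just before executing the `k`-th label. -/
def posAt (ls : List (VLabel Sig)) (k : ℕ) : ℕ := 1 + (ls.take k).countP isLetterL

/-- Validity of a run, given by its label sequence. -/
def ValidLabels (ls : List (VLabel Sig)) : Prop :=
  ∀ x : ℕ,
    ls.count (VLabel.openv x) ≤ 1 ∧
    ls.count (VLabel.closev x) ≤ 1 ∧
    ((VLabel.openv x) ∈ ls ↔ (VLabel.closev x) ∈ ls) ∧
    ∀ i j : ℕ, ls[i]? = some (VLabel.openv x) → ls[j]? = some (VLabel.closev x) →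
      posAt ls i ≤ posAt ls j

/-- The mapping `μ_ρ` extracted from a (valid accepting) run with label sequence `ls`. -/
def runMapping (ls : List (VLabel Sig)) : VMapping := fun x =>
  if (VLabel.openv x) ∈ ls then
    some (posAt ls (ls.idxOf (VLabel.openv x)), posAt ls (ls.idxOf (VLabel.closev x)))
  else none

/-- `ls` is the label sequence of an accepting run of `A`. -/
def AcceptsWith (A : VA Sig) (ls : List (VLabel Sig)) : Prop :=
  ∃ qf, VA.PathFrom A A.q0 ls qf ∧ qf ∈ A.F

/-- `⟦A⟧(d)`. -/
def vaSem (A : VA Sig) (d : List Sig) : Set VMapping :=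
  {μ | ∃ ls, AcceptsWith A ls ∧ readWord ls = d ∧ ValidLabels ls ∧ μ = runMapping ls}

/-- A VA is sequential if all of its accepting runs are valid. -/
def VA.Sequential (A : VA Sig) : Prop := ∀ ls, AcceptsWith A ls → ValidLabels ls

/-- A run from the initial state to `q` that is a prefix of an accepting run. -/
def PrefixRun (A : VA Sig) (ls : List (VLabel Sig)) (q : ℕ) : Prop :=
  VA.PathFrom A A.q0 ls q ∧ ∃ ls' qf, VA.PathFrom A q ls' qf ∧ qf ∈ A.F

/-- `A` is semi-functional for the variable `x`: no state has extended configuration `d`. -/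
def SemiFunctionalFor (A : VA Sig) (x : ℕ) : Prop :=
  ¬ ∃ q ls1 ls2, PrefixRun A ls1 q ∧ PrefixRun A ls2 q ∧
      (VLabel.closev x) ∈ ls1 ∧ (VLabel.openv x) ∉ ls2

def SemiFunctionalForSet (A : VA Sig) (X : Finset ℕ) : Prop :=
  ∀ x ∈ X, SemiFunctionalFor A x

/-- Functional VA: sequential, and every accepting run opens and closes every variable. -/
def FunctionalVA (A : VA Sig) : Prop :=
  A.Sequential ∧ ∀ ls, AcceptsWith A ls → ∀ x ∈ varsOf A,
    (VLabel.openv x) ∈ ls ∧ (VLabel.closev x) ∈ ls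

/-- `l` has a unique target state in `A`. -/
def UniqueTarget (A : VA Sig) (l : VLabel Sig) : Prop :=
  ∃ qt : ℕ, ∀ p q : ℕ, (p, l, q) ∈ A.δ → q = qt

/-- `A` is synchronized for the variable `x`. -/
def SyncForVA (A : VA Sig) (x : ℕ) : Prop :=
  UniqueTarget A (VLabel.openv x) ∧ UniqueTarget A (VLabel.closev x) ∧
    ((∀ ls, AcceptsWith A ls → (VLabel.openv x) ∈ ls ∧ (VLabel.closev x) ∈ ls) ∨
     (∀ ls, AcceptsWith A ls → (VLabel.openv x) ∉ ls ∧ (VLabel.closev x) ∉ ls))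

/-- `A` is the disjunctive functional VA with functional components `parts`. -/
def DisjFunctionalVAWith (A : VA Sig) (parts : List (VA Sig)) : Prop :=
  (∀ B ∈ parts, FunctionalVA B) ∧
  (parts.Pairwise fun B C => Disjoint (statesOf B) (statesOf C)) ∧
  (∀ B ∈ parts, A.q0 ∉ statesOf B) ∧
  A.F = parts.foldr (fun B s => B.F ∪ s) (∅ : Finset ℕ) ∧
  A.δ = (parts.map (fun B => (A.q0, (VLabel.eps : VLabel Sig), B.q0))).toFinset
        ∪ parts.foldr (fun B s => B.δ ∪ s) (∅ : Finset (ℕ × VLabel Sig × ℕ))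

def DisjFunctionalVA (A : VA Sig) : Prop := ∃ parts, DisjFunctionalVAWith A parts

/-! ### 3CNF formulas -/

/-- A 3CNF clause over `n` Boolean variables: a triple of literals; `(i, true)` is `xᵢ`,
`(i, false)` is `¬xᵢ`. -/
def Clause3 (n : ℕ) : Type := (Fin n × Bool) × (Fin n × Bool) × (Fin n × Bool)

def litsOf {n : ℕ} (c : Clause3 n) : List (Fin n × Bool) := [c.1, c.2.1, c.2.2]

def clauseSat {n : ℕ} (τ : Fin n → Bool) (c : Clause3 n) : Prop :=
  ∃ l ∈ litsOf c, τ l.1 = l.2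

def Sat3 {n m : ℕ} (φ : Fin m → Clause3 n) : Prop :=
  ∃ τ : Fin n → Bool, ∀ j, clauseSat τ (φ j)

end Spanners

namespace Spanners

variable {Sig : Type}

/-- `β_i := (x_i{ε}·a) ∨ x_i{a}`. -/
def betaS1 (a : Sig) (i : ℕ) : RGX Sig :=
  .union (.concat (.bind i .eps) (.letter a)) (.bind i (.letter a))

/-- `γ1 := β1·⋯·βn`. -/
def gamma1S1 (a : Sig) (n : ℕ) : RGX Sig :=
  concatList (List.ofFn fun i : Fin n => betaS1 a (i : ℕ))

/-- `δ_ℓ := x_ℓ{ε}·a` if `x_ℓ` occurs positively, `x_ℓ{a}` if it occurs negatively. -/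
def deltaS1 (a : Sig) (i : ℕ) (pos : Bool) : RGX Sig :=
  if pos then .concat (.bind i .eps) (.letter a) else .bind i (.letter a)

/-- `γ2^i`: obtained from `γ1` by replacing `β_ℓ` with `δ_ℓ` at the positions of the
literals of clause `C_i`. -/
def gamma2iS1 (a : Sig) {n : ℕ} (c : Clause3 n) : RGX Sig :=
  concatList (List.ofFn fun i : Fin n =>
    match (litsOf c).find? (fun l => decide (l.1 = i)) with
    | some l => deltaS1 a (i : ℕ) l.2
    | none => betaS1 a (i : ℕ))

/-- `γ2 := γ2^1 ∨ ⋯ ∨ γ2^m`. -/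
def gamma2S1 (a : Sig) {n m : ℕ} (φ : Fin m → Clause3 n) : RGX Sig :=
  disjList (List.ofFn fun j : Fin m => gamma2iS1 a (φ j))

/-! ### Auxiliary development -/

lemma munion_empty_right (μ : VMapping) : munion μ emptyMapping = μ := by
  funext x
  show (match μ x with | some s => some s | none => emptyMapping x) = μ x
  cases μ x <;> rfl

lemma compatible_refl (μ : VMapping) : Compatible μ μ := by
  intro x s1 s2 h1 h2
  rw [h1] at h2
  exact Option.some.inj h2

lemma rmatch_bounds {α : RGX Sig} {d : List Sig} {i j : ℕ} {μ : VMapping}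
    (h : RMatch α d i j μ) : 1 ≤ i ∧ i ≤ j ∧ j ≤ d.length + 1 := by
  induction h with
  | eps h1 h2 => exact ⟨h1, le_rfl, h2⟩
  | @letter d i σ h1 h2 =>
      have hi : i - 1 < d.length := by
        by_contra hc
        rw [List.getElem?_eq_none (le_of_not_gt hc)] at h2
        cases h2
      exact ⟨h1, by omega, by omega⟩
  | unionL h ih => exact ih
  | unionR h ih => exact ih
  | concat h1 h2 hd ih1 ih2 => omega
  | bind h hx ih => exact ih
  | starNil h1 h2 => exact ⟨h1, le_rfl, h2⟩
  | starCons h1 h2 hd ih1 ih2 => omega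

def spanB (p : ℕ) (b : Bool) : Span := if b then (p, p + 1) else (p, p)

/-- `ρ` matches exactly one letter of `aᴺ`, binding variable `k` to an
`ε`-span (`b = false`) or the one-letter span (`b = true`), with allowed choices `S`. -/
def Step (a : Sig) (ρ : RGX Sig) (k : ℕ) (S : Bool → Prop) : Prop :=
  ∀ N i j μ, RMatch ρ (List.replicate N a) i j μ ↔
    (1 ≤ i ∧ i ≤ N ∧ j = i + 1 ∧ ∃ b, S b ∧ μ = minsert k (spanB i b) emptyMapping)

lemma get?_replicate {a : Sig} {N i : ℕ} (h1 : 1 ≤ i) (h2 : i ≤ N) :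
    (List.replicate N a)[i - 1]? = some a := by
  rw [List.getElem?_replicate, if_pos (by omega)]

lemma rmatch_letter_iff {a : Sig} {N i j : ℕ} {μ : VMapping} :
    RMatch (.letter a) (List.replicate N a) i j μ ↔
      (1 ≤ i ∧ i ≤ N ∧ j = i + 1 ∧ μ = emptyMapping) := by
  constructor
  · intro h
    cases h with
    | letter h1 h2 =>
        have hi : i - 1 < N := by
          by_contra hc
          rw [List.getElem?_eq_none (by simpa using le_of_not_gt hc)] at h2
          cases h2
        exact ⟨h1, by omega, rfl, rfl⟩
  · rintro ⟨h1, h2, rfl, rfl⟩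
    exact RMatch.letter h1 (get?_replicate h1 h2)

lemma step_beta (a : Sig) (k : ℕ) : Step a (betaS1 a k) k (fun _ => True) := by
  intro N i j μ
  constructor
  · intro h
    cases h with
    | unionL h =>
        cases h with
        | concat h1 h2 hd =>
            cases h1 with
            | bind h hx =>
                cases h with
                | eps e1 e2 =>
                    obtain ⟨l1, l2, rfl, rfl⟩ := rmatch_letter_iff.mp h2
                    refine ⟨e1, l2, rfl, false, trivial, ?_⟩
                    rw [munion_empty_right]
                    rfl
    | unionR h =>
        cases h with
        | bind h hx =>
            obtain ⟨l1, l2, rfl, rfl⟩ := rmatch_letter_iff.mp h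
            exact ⟨l1, l2, rfl, true, trivial, rfl⟩
  · rintro ⟨h1, h2, rfl, b, -, rfl⟩
    cases b with
    | false =>
        apply RMatch.unionL
        have := RMatch.concat (d := List.replicate N a)
          (RMatch.bind (x := k) (RMatch.eps h1 (by simp; omega)) rfl)
          (rmatch_letter_iff.mpr ⟨h1, h2, rfl, rfl⟩)
          (fun x => Or.inr rfl)
        rwa [munion_empty_right] at this
    | true =>
        apply RMatch.unionR
        exact RMatch.bind (rmatch_letter_iff.mpr ⟨h1, h2, rfl, rfl⟩) rfl

lemma step_delta (a : Sig) (k : ℕ) (pos : Bool) :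
    Step a (deltaS1 a k pos) k (fun b => b = !pos) := by
  intro N i j μ
  cases pos with
  | false =>
      show RMatch (.bind k (.letter a)) _ _ _ _ ↔ _
      constructor
      · intro h
        cases h with
        | bind h hx =>
            obtain ⟨l1, l2, rfl, rfl⟩ := rmatch_letter_iff.mp h
            exact ⟨l1, l2, rfl, true, rfl, rfl⟩
      · rintro ⟨h1, h2, rfl, b, rfl, rfl⟩
        exact RMatch.bind (rmatch_letter_iff.mpr ⟨h1, h2, rfl, rfl⟩) rfl
  | true =>
      show RMatch (.concat (.bind k .eps) (.letter a)) _ _ _ _ ↔ _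
      constructor
      · intro h
        cases h with
        | concat h1 h2 hd =>
            cases h1 with
            | bind h hx =>
                cases h with
                | eps e1 e2 =>
                    obtain ⟨l1, l2, rfl, rfl⟩ := rmatch_letter_iff.mp h2
                    refine ⟨e1, l2, rfl, false, rfl, ?_⟩
                    rw [munion_empty_right]
                    rfl
      · rintro ⟨h1, h2, rfl, b, rfl, rfl⟩
        have := RMatch.concat (d := List.replicate N a)
          (RMatch.bind (x := k) (RMatch.eps h1 (by simp; omega)) rfl)
          (rmatch_letter_iff.mpr ⟨h1, h2, rfl, rfl⟩)
          (fun x => Or.inr rfl)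
        rwa [munion_empty_right] at this

lemma step_congr {a : Sig} {ρ : RGX Sig} {k : ℕ} {S S' : Bool → Prop}
    (h : Step a ρ k S) (h2 : ∀ b, S b ↔ S' b) : Step a ρ k S' := by
  intro N i j μ
  rw [h]
  constructor
  · rintro ⟨a1, a2, a3, b, hb, a4⟩; exact ⟨a1, a2, a3, b, (h2 b).mp hb, a4⟩
  · rintro ⟨a1, a2, a3, b, hb, a4⟩; exact ⟨a1, a2, a3, b, (h2 b).mpr hb, a4⟩

/-! ### Chains -/

def chainF (f : ℕ → RGX Sig) (s n : ℕ) : RGX Sig :=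
  concatList (List.ofFn fun t : Fin n => f (s + t))

def chainMap (s n : ℕ) (τ : ℕ → Bool) : VMapping := fun x =>
  if s ≤ x ∧ x < s + n then some (spanB (x + 1) (τ x)) else none

lemma concatList_cons {α : RGX Sig} {L : List (RGX Sig)} (h : L ≠ []) :
    concatList (α :: L) = .concat α (concatList L) := by
  cases L with
  | nil => exact absurd rfl h
  | cons b L' => rfl

lemma munion_apply_none {μ1 μ2 : VMapping} {x : ℕ} (h : μ1 x = none) :
    munion μ1 μ2 x = μ2 x := by
  unfold munion
  rw [h]

lemma munion_apply_some {μ1 μ2 : VMapping} {x : ℕ} {v : Span} (h : μ1 x = some v) :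
    munion μ1 μ2 x = some v := by
  unfold munion
  rw [h]

lemma chainF_zero {f : ℕ → RGX Sig} {s : ℕ} : chainF f s 0 = .eps := rfl

lemma chainF_one {f : ℕ → RGX Sig} {s : ℕ} : chainF f s 1 = f s := by
  simp [chainF, List.ofFn_succ, concatList]

lemma ofFn_chain_succ {f : ℕ → RGX Sig} {s n : ℕ} :
    (List.ofFn fun t : Fin (n + 1) => f (s + t)) =
      f s :: (List.ofFn fun t : Fin n => f ((s + 1) + t)) := by
  rw [List.ofFn_succ]
  congr 1
  exact congrArg List.ofFn (funext fun t => by congr 1; simp only [Fin.val_succ]; omega)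

lemma chainF_succ {f : ℕ → RGX Sig} {s n : ℕ} (hn : n ≠ 0) :
    chainF f s (n + 1) = .concat (f s) (chainF f (s + 1) n) := by
  unfold chainF
  rw [ofFn_chain_succ, concatList_cons]
  intro hc
  have := congrArg List.length hc
  simp at this
  omega

lemma rmatch_chain_succ {f : ℕ → RGX Sig} {d : List Sig} {i j s n : ℕ} {μ : VMapping} :
    RMatch (chainF f s (n + 1)) d i j μ ↔
      ∃ k μ1 μ2, RMatch (f s) d i k μ1 ∧ RMatch (chainF f (s + 1) n) d k j μ2 ∧
        DisjointDom μ1 μ2 ∧ μ = munion μ1 μ2 := by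
  cases n with
  | zero =>
      rw [chainF_one, chainF_zero]
      constructor
      · intro h
        obtain ⟨h1, h2, h3⟩ := rmatch_bounds h
        exact ⟨j, μ, emptyMapping, h, RMatch.eps (le_trans h1 h2) h3,
          fun x => Or.inr rfl, (munion_empty_right μ).symm⟩
      · rintro ⟨k, μ1, μ2, h1, h2, hd, rfl⟩
        cases h2 with
        | eps _ _ => rw [munion_empty_right]; exact h1
  | succ n' =>
      rw [chainF_succ (Nat.succ_ne_zero n')]
      constructor
      · intro h
        cases h with
        | concat h1 h2 hd => exact ⟨_, _, _, h1, h2, hd, rfl⟩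
      · rintro ⟨k, μ1, μ2, h1, h2, hd, rfl⟩
        exact RMatch.concat h1 h2 hd

lemma chainMap_zero {s : ℕ} {τ : ℕ → Bool} : chainMap s 0 τ = emptyMapping := by
  funext x
  simp only [chainMap, emptyMapping]
  rw [if_neg]
  omega

lemma chain_iff {a : Sig} {f : ℕ → RGX Sig} {A : ℕ → Bool → Prop}
    (hf : ∀ k, Step a (f k) k (A k)) (N : ℕ) :
    ∀ n s j μ, RMatch (chainF f s n) (List.replicate N a) (s + 1) j μ ↔
      (j = s + n + 1 ∧ s + n ≤ N ∧
        ∃ τ : ℕ → Bool, (∀ t, s ≤ t → t < s + n → A t (τ t)) ∧ μ = chainMap s n τ) := by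
  intro n
  induction n with
  | zero =>
      intro s j μ
      rw [chainF_zero]
      constructor
      · intro h
        cases h with
        | eps h1 h2 =>
            refine ⟨by omega, by simp at h2; omega, fun _ => false, fun t ht1 ht2 => by omega, ?_⟩
            rw [chainMap_zero]
      · rintro ⟨rfl, hN, τ, -, rfl⟩
        rw [chainMap_zero]
        have : s + 0 + 1 = s + 1 := by omega
        rw [this]
        exact RMatch.eps (by omega) (by simp; omega)
  | succ n IH =>
      intro s j μ
      rw [rmatch_chain_succ]
      constructor
      · rintro ⟨k, μ1, μ2, h1, h2, hd, rfl⟩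
        rw [hf s] at h1
        obtain ⟨hi1, hiN, rfl, b, hb, rfl⟩ := h1
        obtain ⟨rfl, hN, τ', hτ', rfl⟩ := (IH (s + 1) _ _).mp h2
        refine ⟨by omega, by omega, fun t => if t = s then b else τ' t, ?_, ?_⟩
        · intro t ht1 ht2
          show A t (if t = s then b else τ' t)
          by_cases hts : t = s
          · subst hts; rw [if_pos rfl]; exact hb
          · rw [if_neg hts]; exact hτ' t (by omega) (by omega)
        · funext x
          by_cases hxs : x = s
          · subst hxs
            rw [munion_apply_some (μ2 := chainMap (x + 1) n τ')
              (show minsert x (spanB (x + 1) b) emptyMapping x = some (spanB (x + 1) b) by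
                simp [minsert])]
            show _ = chainMap x (n + 1) _ x
            simp only [chainMap]
            rw [if_pos (by omega : x ≤ x ∧ x < x + (n + 1))]
            simp
          · rw [munion_apply_none (μ2 := chainMap (s + 1) n τ')
              (show minsert s (spanB (s + 1) b) emptyMapping x = none by
                simp [minsert, hxs, emptyMapping])]
            show chainMap (s + 1) n τ' x = chainMap s (n + 1) _ x
            simp only [chainMap]
            rw [if_neg hxs]
            split_ifs with hc1 hc2 hc2 <;> first | rfl | omega
      · rintro ⟨rfl, hN, τ, hτ, rfl⟩
        refine ⟨s + 2, minsert s (spanB (s + 1) (τ s)) emptyMapping, chainMap (s + 1) n τ,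
          ?_, ?_, ?_, ?_⟩
        · rw [hf s]
          exact ⟨by omega, by omega, rfl, τ s, hτ s (by omega) (by omega), rfl⟩
        · exact (IH (s + 1) _ _).mpr
            ⟨by omega, by omega, τ, fun t h1 h2 => hτ t (by omega) (by omega), rfl⟩
        · intro x
          by_cases hxs : x = s
          · subst hxs
            right
            simp only [chainMap]
            rw [if_neg (by omega)]
          · left
            simp only [minsert]
            rw [if_neg hxs]
            rfl
        · funext x
          by_cases hxs : x = s
          · subst hxs
            rw [munion_apply_some (μ2 := chainMap (x + 1) n τ)
              (show minsert x (spanB (x + 1) (τ x)) emptyMapping x = some (spanB (x + 1) (τ x)) by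
                simp [minsert])]
            show chainMap x (n + 1) τ x = _
            simp only [chainMap]
            rw [if_pos (by omega : x ≤ x ∧ x < x + (n + 1))]
          · rw [munion_apply_none (μ2 := chainMap (s + 1) n τ)
              (show minsert s (spanB (s + 1) (τ s)) emptyMapping x = none by
                simp [minsert, hxs, emptyMapping])]
            show chainMap s (n + 1) τ x = chainMap (s + 1) n τ x
            simp only [chainMap]
            split_ifs with hc1 hc2 hc2 <;> first | rfl | omega

/-! ### Vars and functionality of chains -/

lemma vars_chainF {f : ℕ → RGX Sig} (hv : ∀ k, (f k).vars = {k}) :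
    ∀ n s, (chainF f s n).vars = (Finset.range n).image (s + ·) := by
  intro n
  induction n with
  | zero => intro s; simp [chainF_zero, RGX.vars]
  | succ n IH =>
      intro s
      cases n with
      | zero => simp [chainF_one, hv s]
      | succ n' =>
          rw [chainF_succ (Nat.succ_ne_zero n')]
          show (f s).vars ∪ (chainF f (s + 1) (n' + 1)).vars = _
          rw [hv s, IH (s + 1)]
          ext x
          simp only [Finset.mem_union, Finset.mem_singleton, Finset.mem_image,
            Finset.mem_range]
          constructor
          · rintro (rfl | ⟨t, ht, rfl⟩)
            · exact ⟨0, by omega, by omega⟩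
            · exact ⟨t + 1, by omega, by omega⟩
          · rintro ⟨t, ht, rfl⟩
            cases t with
            | zero => left; omega
            | succ t' => right; exact ⟨t', by omega, by omega⟩

lemma funfor_chainF {f : ℕ → RGX Sig} (hv : ∀ k, (f k).vars = {k})
    (hf : ∀ k, FunctionalFor (f k) {k}) :
    ∀ n s, FunctionalFor (chainF f s n) ((Finset.range n).image (s + ·)) := by
  intro n
  induction n with
  | zero =>
      intro s
      have : (Finset.range 0).image (s + ·) = ∅ := by simp
      rw [this, chainF_zero]
      exact FunctionalFor.word RGX.IsWord.eps
  | succ n IH =>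
      intro s
      cases n with
      | zero =>
          rw [chainF_one]
          have : (Finset.range 1).image (s + ·) = {s} := by simp
          rw [this]
          exact hf s
      | succ n' =>
          rw [chainF_succ (Nat.succ_ne_zero n')]
          refine FunctionalFor.concat {s} ?_ (hf s) ?_
          · intro x hx
            simp only [Finset.mem_singleton] at hx
            subst hx
            simp only [Finset.mem_image, Finset.mem_range]
            exact ⟨0, by omega, by omega⟩
          · have : (Finset.range (n' + 1 + 1)).image (s + ·) \ {s} =
                (Finset.range (n' + 1)).image ((s + 1) + ·) := by
              ext x
              simp only [Finset.mem_sdiff, Finset.mem_image, Finset.mem_range,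
                Finset.mem_singleton]
              constructor
              · rintro ⟨⟨t, ht, rfl⟩, hne⟩
                cases t with
                | zero => exact absurd (by omega) hne
                | succ t' => exact ⟨t', by omega, by omega⟩
              · rintro ⟨t, ht, rfl⟩
                exact ⟨⟨t + 1, by omega, by omega⟩, by omega⟩
            rw [this]
            exact IH (s + 1)

/-! ### The concrete formulas as chains -/

lemma vars_beta (a : Sig) (k : ℕ) : (betaS1 a k).vars = {k} := by
  simp [betaS1, RGX.vars]

lemma funfor_beta (a : Sig) (k : ℕ) : FunctionalFor (betaS1 a k) {k} := by
  refine FunctionalFor.union ?_ ?_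
  · refine FunctionalFor.concat {k} subset_rfl
      (FunctionalFor.bind ?_) ?_
    · rw [Finset.erase_singleton]
      exact FunctionalFor.word RGX.IsWord.eps
    · rw [Finset.sdiff_self]
      exact FunctionalFor.word (RGX.IsWord.letter a)
  · refine FunctionalFor.bind ?_
    rw [Finset.erase_singleton]
    exact FunctionalFor.word (RGX.IsWord.letter a)

lemma vars_delta (a : Sig) (k : ℕ) (pos : Bool) : (deltaS1 a k pos).vars = {k} := by
  cases pos <;> simp [deltaS1, RGX.vars]

lemma funfor_delta (a : Sig) (k : ℕ) (pos : Bool) :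
    FunctionalFor (deltaS1 a k pos) {k} := by
  cases pos with
  | false =>
      refine FunctionalFor.bind ?_
      rw [Finset.erase_singleton]
      exact FunctionalFor.word (RGX.IsWord.letter a)
  | true =>
      refine FunctionalFor.concat {k} subset_rfl (FunctionalFor.bind ?_) ?_
      · rw [Finset.erase_singleton]
        exact FunctionalFor.word RGX.IsWord.eps
      · rw [Finset.sdiff_self]
        exact FunctionalFor.word (RGX.IsWord.letter a)

def fC (a : Sig) {n : ℕ} (c : Clause3 n) (t : ℕ) : RGX Sig :=
  match (litsOf c).find? (fun l => decide ((l.1 : ℕ) = t)) with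
  | some l => deltaS1 a t l.2
  | none => betaS1 a t

def AC {n : ℕ} (c : Clause3 n) (t : ℕ) (b : Bool) : Prop :=
  ∀ l, (litsOf c).find? (fun l' => decide ((l'.1 : ℕ) = t)) = some l → b = !l.2

lemma vars_fC (a : Sig) {n : ℕ} (c : Clause3 n) (t : ℕ) : (fC a c t).vars = {t} := by
  unfold fC
  rcases hfind : (litsOf c).find? (fun l => decide ((l.1 : ℕ) = t)) with - | l
  · simp only [hfind]; exact vars_beta a t
  · simp only [hfind]; exact vars_delta a t l.2

lemma funfor_fC (a : Sig) {n : ℕ} (c : Clause3 n) (t : ℕ) :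
    FunctionalFor (fC a c t) {t} := by
  unfold fC
  rcases hfind : (litsOf c).find? (fun l => decide ((l.1 : ℕ) = t)) with - | l
  · simp only [hfind]; exact funfor_beta a t
  · simp only [hfind]; exact funfor_delta a t l.2

lemma step_fC (a : Sig) {n : ℕ} (c : Clause3 n) (t : ℕ) :
    Step a (fC a c t) t (AC c t) := by
  unfold fC
  rcases hfind : (litsOf c).find? (fun l => decide ((l.1 : ℕ) = t)) with - | l
  · simp only [hfind]
    refine step_congr (step_beta a t) ?_
    intro b
    simp only [AC, hfind]
    constructor
    · intro _ l' hl'; cases hl'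
    · intro _; trivial
  · simp only [hfind]
    refine step_congr (step_delta a t l.2) ?_
    intro b
    simp only [AC, hfind]
    constructor
    · rintro rfl l' hl'
      rw [← Option.some.inj hl']
    · intro h
      have := h l rfl
      simp [this]

lemma gamma1_eq (a : Sig) (n : ℕ) : gamma1S1 a n = chainF (betaS1 a) 0 n := by
  unfold gamma1S1 chainF
  exact congrArg concatList (congrArg List.ofFn (funext fun i => by congr 1; omega))

lemma gamma2i_eq (a : Sig) {n : ℕ} (c : Clause3 n) :
    gamma2iS1 a c = chainF (fC a c) 0 n := by
  unfold gamma2iS1 chainF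
  refine congrArg concatList (congrArg List.ofFn (funext fun i => ?_))
  have hz : (0 : ℕ) + (i : ℕ) = (i : ℕ) := by omega
  rw [hz]
  unfold fC
  have hp : (fun l : Fin n × Bool => decide (l.1 = i)) =
      (fun l : Fin n × Bool => decide ((l.1 : ℕ) = (i : ℕ))) := by
    funext l
    simp [Fin.ext_iff]
  rw [hp]

/-! ### disjList -/

lemma disjList_cons {α : RGX Sig} {L : List (RGX Sig)} (h : L ≠ []) :
    disjList (α :: L) = .union α (disjList L) := by
  cases L with
  | nil => exact absurd rfl h
  | cons b L' => rfl

lemma rmatch_disjList {d : List Sig} {i j : ℕ} {μ : VMapping} :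
    ∀ L : List (RGX Sig), (RMatch (disjList L) d i j μ ↔ ∃ α ∈ L, RMatch α d i j μ) := by
  intro L
  induction L with
  | nil =>
      constructor
      · intro h; cases h
      · rintro ⟨α, hα, -⟩; simp at hα
  | cons β L' IH =>
      cases L' with
      | nil =>
          show RMatch β d i j μ ↔ _
          constructor
          · intro h; exact ⟨β, by simp, h⟩
          · rintro ⟨α, hα, h⟩; simp at hα; subst hα; exact h
      | cons β' L'' =>
          rw [disjList_cons (by simp)]
          constructor
          · intro h
            cases h with
            | unionL h => exact ⟨β, by simp, h⟩
            | unionR h =>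
                obtain ⟨α, hα, h⟩ := IH.mp h
                exact ⟨α, List.mem_cons_of_mem _ hα, h⟩
          · rintro ⟨α, hα, h⟩
            rcases List.mem_cons.mp hα with rfl | hα
            · exact RMatch.unionL h
            · exact RMatch.unionR (IH.mpr ⟨α, hα, h⟩)

lemma vars_disjList {V : Finset ℕ} :
    ∀ L : List (RGX Sig), L ≠ [] → (∀ α ∈ L, α.vars = V) → (disjList L).vars = V := by
  intro L
  induction L with
  | nil => intro h; exact absurd rfl h
  | cons β L' IH =>
      intro _ hall
      cases L' with
      | nil => exact hall β (by simp)
      | cons β' L'' =>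
          rw [disjList_cons (by simp)]
          show β.vars ∪ (disjList (β' :: L'')).vars = V
          rw [hall β (by simp), IH (by simp) (fun α hα => hall α (List.mem_cons_of_mem _ hα))]
          simp

lemma funfor_disjList {V : Finset ℕ} :
    ∀ L : List (RGX Sig), L ≠ [] → (∀ α ∈ L, FunctionalFor α V) →
      FunctionalFor (disjList L) V := by
  intro L
  induction L with
  | nil => intro h; exact absurd rfl h
  | cons β L' IH =>
      intro _ hall
      cases L' with
      | nil => exact hall β (by simp)
      | cons β' L'' =>
          rw [disjList_cons (by simp)]
          exact FunctionalFor.union (hall β (by simp))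
            (IH (by simp) (fun α hα => hall α (List.mem_cons_of_mem _ hα)))

/-! ### Semantics of the concrete formulas -/

lemma sem_gamma1 {a : Sig} {n : ℕ} {μ : VMapping} :
    μ ∈ rgxSem (gamma1S1 a n) (List.replicate n a) ↔ ∃ τ : ℕ → Bool, μ = chainMap 0 n τ := by
  have hc := chain_iff (f := betaS1 a) (A := fun _ _ => True) (fun k => step_beta a k) n
  show RMatch (gamma1S1 a n) _ 1 ((List.replicate n a).length + 1) μ ↔ _
  rw [gamma1_eq, List.length_replicate]
  constructor
  · intro h
    obtain ⟨-, -, τ, -, rfl⟩ := (hc n 0 (n + 1) μ).mp h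
    exact ⟨τ, rfl⟩
  · rintro ⟨τ, rfl⟩
    exact (hc n 0 (n + 1) _).mpr ⟨by omega, by omega, τ, fun _ _ _ => trivial, rfl⟩

lemma sem_gamma2i {a : Sig} {n : ℕ} {c : Clause3 n} {μ : VMapping} :
    μ ∈ rgxSem (gamma2iS1 a c) (List.replicate n a) ↔
      ∃ τ : ℕ → Bool, (∀ t, t < n → AC c t (τ t)) ∧ μ = chainMap 0 n τ := by
  have hc := chain_iff (f := fC a c) (A := AC c) (fun k => step_fC a c k) n
  show RMatch (gamma2iS1 a c) _ 1 ((List.replicate n a).length + 1) μ ↔ _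
  rw [gamma2i_eq, List.length_replicate]
  constructor
  · intro h
    obtain ⟨-, -, τ, hτ, rfl⟩ := (hc n 0 (n + 1) μ).mp h
    exact ⟨τ, fun t ht => hτ t (by omega) (by omega), rfl⟩
  · rintro ⟨τ, hτ, rfl⟩
    exact (hc n 0 (n + 1) _).mpr
      ⟨by omega, by omega, τ, fun t h1 h2 => hτ t (by omega), rfl⟩

lemma sem_gamma2 {a : Sig} {n m : ℕ} {φ : Fin m → Clause3 n} {μ : VMapping} :
    μ ∈ rgxSem (gamma2S1 a φ) (List.replicate n a) ↔
      ∃ j : Fin m, μ ∈ rgxSem (gamma2iS1 a (φ j)) (List.replicate n a) := by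
  show RMatch (gamma2S1 a φ) _ 1 _ μ ↔ _
  unfold gamma2S1
  rw [rmatch_disjList]
  constructor
  · rintro ⟨α, hα, h⟩
    obtain ⟨j, rfl⟩ := List.mem_ofFn.mp hα
    exact ⟨j, h⟩
  · rintro ⟨j, h⟩
    exact ⟨gamma2iS1 a (φ j), List.mem_ofFn.mpr ⟨j, rfl⟩, h⟩

lemma compat_chainMap {n : ℕ} {τ1 τ2 : ℕ → Bool}
    (h : Compatible (chainMap 0 n τ1) (chainMap 0 n τ2)) :
    ∀ t, t < n → τ1 t = τ2 t := by
  intro t ht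
  have h1 : chainMap 0 n τ1 t = some (spanB (t + 1) (τ1 t)) := by
    simp only [chainMap]; rw [if_pos (by omega)]
  have h2 : chainMap 0 n τ2 t = some (spanB (t + 1) (τ2 t)) := by
    simp only [chainMap]; rw [if_pos (by omega)]
  have := h t _ _ h1 h2
  cases hb1 : τ1 t <;> cases hb2 : τ2 t <;> rw [hb1, hb2] at this <;>
    simp [spanB] at this <;> rfl

lemma find?_litsOf {n : ℕ} {c : Clause3 n} (hnd : ((litsOf c).map Prod.fst).Nodup)
    {l : Fin n × Bool} (hl : l ∈ litsOf c) :
    (litsOf c).find? (fun l' => decide ((l'.1 : ℕ) = (l.1 : ℕ))) = some l := by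
  obtain ⟨l1, l2, l3⟩ := c
  simp only [litsOf, List.map_cons, List.map_nil, List.nodup_cons, List.mem_cons,
    List.mem_singleton, List.not_mem_nil, or_false, List.nodup_nil, and_true] at hnd hl
  obtain ⟨hnd1, hnd2, -⟩ := hnd
  rw [not_or] at hnd1
  rcases hl with rfl | rfl | rfl <;> simp only [litsOf]
  · rw [List.find?_cons_of_pos (by simp)]
  · rw [List.find?_cons_of_neg
        (by simp only [decide_eq_true_eq]; exact fun h => hnd1.1 (Fin.val_injective h)),
      List.find?_cons_of_pos (by simp)]
  · rw [List.find?_cons_of_neg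
        (by simp only [decide_eq_true_eq]; exact fun h => hnd1.2 (Fin.val_injective h)),
      List.find?_cons_of_neg
        (by simp only [decide_eq_true_eq]; exact fun h => hnd2 (Fin.val_injective h)),
      List.find?_cons_of_pos (by simp)]

lemma image_range_eq (n : ℕ) :
    (Finset.range n).image ((0 : ℕ) + ·) = Finset.univ.image (fun i : Fin n => (i : ℕ)) := by
  ext x
  simp only [Finset.mem_image, Finset.mem_range, Finset.mem_univ, true_and]
  constructor
  · rintro ⟨t, ht, rfl⟩; exact ⟨⟨t, ht⟩, by simp⟩
  · rintro ⟨i, rfl⟩; exact ⟨(i : ℕ), i.isLt, by omega⟩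

theorem statement1 (a : Sig) (n m : ℕ) (hm : 0 < m) (φ : Fin m → Clause3 n)
    (hdistinct : ∀ j : Fin m, ((litsOf (φ j)).map Prod.fst).Nodup) :
    (gamma1S1 a n).Functional ∧ (gamma2S1 a φ).Functional ∧
    (gamma1S1 a n).vars = (Finset.univ.image fun i : Fin n => (i : ℕ)) ∧
    (gamma2S1 a φ).vars = (Finset.univ.image fun i : Fin n => (i : ℕ)) ∧
    ((diffSet (rgxSem (gamma1S1 a n) (List.replicate n a))
              (rgxSem (gamma2S1 a φ) (List.replicate n a))).Nonempty ↔ Sat3 φ) := by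
  have hVeq := image_range_eq n
  have hvars2 : ∀ j : Fin m,
      (gamma2iS1 a (φ j)).vars = (Finset.range n).image ((0 : ℕ) + ·) := fun j => by
    rw [gamma2i_eq]
    exact vars_chainF (vars_fC a (φ j)) n 0
  have hne : (List.ofFn fun j : Fin m => gamma2iS1 a (φ j)) ≠ [] := by
    intro hc
    have := congrArg List.length hc
    simp at this
    omega
  have hv2 : (gamma2S1 a φ).vars = (Finset.range n).image ((0 : ℕ) + ·) := by
    unfold gamma2S1
    refine vars_disjList _ hne ?_
    intro α hα
    obtain ⟨j, rfl⟩ := List.mem_ofFn.mp hα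
    exact hvars2 j
  refine ⟨?_, ?_, ?_, ?_, ?_⟩
  · unfold RGX.Functional
    rw [gamma1_eq, vars_chainF (vars_beta a)]
    exact funfor_chainF (vars_beta a) (funfor_beta a) n 0
  · unfold RGX.Functional
    rw [hv2]
    unfold gamma2S1
    refine funfor_disjList _ hne ?_
    intro α hα
    obtain ⟨j, rfl⟩ := List.mem_ofFn.mp hα
    rw [gamma2i_eq]
    exact funfor_chainF (vars_fC a (φ j)) (funfor_fC a (φ j)) n 0
  · rw [gamma1_eq, vars_chainF (vars_beta a), hVeq]
  · rw [hv2, hVeq]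
  · constructor
    · rintro ⟨μ, hμ1, hμ2⟩
      obtain ⟨τ, rfl⟩ := sem_gamma1.mp hμ1
      refine ⟨fun i => τ (i : ℕ), fun j => ?_⟩
      by_contra hns
      refine hμ2 (chainMap 0 n τ) ?_ (compatible_refl _)
      rw [sem_gamma2]
      refine ⟨j, sem_gamma2i.mpr ⟨τ, ?_, rfl⟩⟩
      intro t ht l hfind
      have hlmem := List.mem_of_find?_eq_some hfind
      have hp : ((l.1 : ℕ) = t) := by
        have := List.find?_some hfind
        simpa using this
      subst hp
      have hne' : ¬ τ (l.1 : ℕ) = l.2 := fun hc => hns ⟨l, hlmem, hc⟩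
      cases hx : τ (l.1 : ℕ) <;> cases hy : l.2 <;> simp_all
    · rintro ⟨τ0, hτ0⟩
      refine ⟨chainMap 0 n (fun t => if h : t < n then τ0 ⟨t, h⟩ else false),
        sem_gamma1.mpr ⟨_, rfl⟩, ?_⟩
      intro μ2 hμ2 hcomp
      obtain ⟨j, hj⟩ := sem_gamma2.mp hμ2
      obtain ⟨σ, hσ, rfl⟩ := sem_gamma2i.mp hj
      obtain ⟨l, hl, hsat⟩ := hτ0 j
      have ht : (l.1 : ℕ) < n := l.1.isLt
      have hfind := find?_litsOf (hdistinct j) hl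
      have hforced : σ (l.1 : ℕ) = !l.2 := hσ _ ht l hfind
      have heq : τ0 l.1 = σ (l.1 : ℕ) := by
        have := compat_chainMap hcomp _ ht
        simpa [ht] using this
      rw [hsat, hforced] at heq
      exact absurd heq (by cases l.2 <;> simp)

end Spanners
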